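/- Let U be an n×n complex unitary matrix with spectral decomposition U = Σ_r e^{iθ_r} F_r, and let x, y be unit vectors in ℂⁿ. Then pretty good state transfer occurs from x to y if and only if both: (i) x and y are strongly cospectral, i.e., for each r there is μ_r ∈ ℂ with |μ_r| = 1 and F_r x = μ_r F_r y; and (ii) there exists γ ∈ ℂ with |γ| = 1 such that for every ε > 0 there is t ∈ ℤ with |e^{itθ_r} μ_r − γ| < ε for every r in the eigenvalue support Θ_x = {r : F_r x ≠ 0}. -/

import Mathlib

open Matrix Complex Finset

/-- The Euclidean norm of a vector in `ℂⁿ`. -/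
noncomputable def euclNorm {ι : Type*} [Fintype ι] (v : ι → ℂ) : ℝ :=
  Real.sqrt (∑ i, ‖v i‖ ^ 2)

/-- The Euclidean inner product `⟨v, w⟩ = ∑ᵢ vᵢ conj(wᵢ)` on `ℂⁿ`. -/
noncomputable def euclInner {ι : Type*} [Fintype ι] (v w : ι → ℂ) : ℂ :=
  ∑ i, v i * star (w i)

/-- Pretty good state transfer from `x` to `y` under the unitary `U`. -/
def PGST {ι : Type*} [Fintype ι] [DecidableEq ι] (U : Matrix ι ι ℂ) (x y : ι → ℂ) : Prop :=
  ∃ γ : ℂ, ‖γ‖ = 1 ∧ ∀ ε > 0, ∃ t : ℤ, euclNorm ((U ^ t).mulVec x - γ • y) < ε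

namespace PGSTAux

variable {m : Type*} [Fintype m]

lemma euclNorm_nonneg (v : m → ℂ) : 0 ≤ euclNorm v := Real.sqrt_nonneg _

lemma euclNorm_sq (v : m → ℂ) : euclNorm v ^ 2 = ∑ i, ‖v i‖ ^ 2 := by
  rw [euclNorm, Real.sq_sqrt]
  positivity

lemma euclNorm_eq_norm (v : m → ℂ) :
    euclNorm v = ‖(WithLp.equiv 2 (m → ℂ)).symm v‖ := by
  rw [EuclideanSpace.norm_eq]; rfl

lemma euclNorm_eq_zero {v : m → ℂ} (h : euclNorm v = 0) : v = 0 := by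
  rw [euclNorm_eq_norm, norm_eq_zero] at h
  exact (WithLp.equiv 2 (m → ℂ)).symm.injective h

lemma euclNorm_zero : euclNorm (0 : m → ℂ) = 0 := by
  simp [euclNorm]

lemma euclNorm_pos {v : m → ℂ} (h : v ≠ 0) : 0 < euclNorm v := by
  rcases lt_or_eq_of_le (euclNorm_nonneg v) with h' | h'
  · exact h'
  · exact absurd (euclNorm_eq_zero h'.symm) h

lemma euclNorm_smul (c : ℂ) (v : m → ℂ) : euclNorm (c • v) = ‖c‖ * euclNorm v := by
  rw [euclNorm_eq_norm, euclNorm_eq_norm, WithLp.equiv_symm_apply, WithLp.toLp_smul, norm_smul]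

lemma abs_euclNorm_sub_euclNorm_le (a b : m → ℂ) :
    |euclNorm a - euclNorm b| ≤ euclNorm (a - b) := by
  rw [euclNorm_eq_norm, euclNorm_eq_norm, euclNorm_eq_norm, WithLp.equiv_symm_apply, WithLp.toLp_sub]
  exact abs_norm_sub_norm_le _ _

lemma euclInner_self (v : m → ℂ) : euclInner v v = ((euclNorm v ^ 2 : ℝ) : ℂ) := by
  rw [euclNorm_sq, euclInner]
  push_cast
  refine Finset.sum_congr rfl fun i _ => ?_
  rw [show star (v i) = (starRingEnd ℂ) (v i) from rfl, Complex.mul_conj,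
    Complex.normSq_eq_norm_sq]
  push_cast
  ring

lemma euclInner_sum_left {κ : Type*} (s : Finset κ) (w : κ → m → ℂ) (z : m → ℂ) :
    euclInner (∑ r ∈ s, w r) z = ∑ r ∈ s, euclInner (w r) z := by
  simp only [euclInner, Finset.sum_apply, Finset.sum_mul]
  exact Finset.sum_comm

lemma euclInner_sum_right {κ : Type*} (s : Finset κ) (w : κ → m → ℂ) (z : m → ℂ) :
    euclInner z (∑ r ∈ s, w r) = ∑ r ∈ s, euclInner z (w r) := by
  simp only [euclInner, Finset.sum_apply, star_sum, Finset.mul_sum]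
  exact Finset.sum_comm

lemma euclInner_smul_left (c : ℂ) (v z : m → ℂ) :
    euclInner (c • v) z = c * euclInner v z := by
  simp only [euclInner, Pi.smul_apply, smul_eq_mul, Finset.mul_sum, mul_assoc]

lemma euclInner_smul_right (c : ℂ) (v z : m → ℂ) :
    euclInner v (c • z) = star c * euclInner v z := by
  simp only [euclInner, Pi.smul_apply, smul_eq_mul, star_mul', Finset.mul_sum]
  exact Finset.sum_congr rfl fun i _ => by ring

lemma euclInner_sub_left (u v z : m → ℂ) :
    euclInner (u - v) z = euclInner u z - euclInner v z := by
  simp only [euclInner, Pi.sub_apply, sub_mul, Finset.sum_sub_distrib]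

lemma euclInner_add_left (u v z : m → ℂ) :
    euclInner (u + v) z = euclInner u z + euclInner v z := by
  simp only [euclInner, Pi.add_apply, add_mul, Finset.sum_add_distrib]

lemma euclInner_add_right (u v z : m → ℂ) :
    euclInner z (u + v) = euclInner z u + euclInner z v := by
  simp only [euclInner, Pi.add_apply, star_add, mul_add, Finset.sum_add_distrib]

lemma star_euclInner (v w : m → ℂ) : star (euclInner v w) = euclInner w v := by
  simp only [euclInner, star_sum, star_mul', star_star]
  exact Finset.sum_congr rfl fun i _ => by ring

lemma euclInner_mulVec (A : Matrix m m ℂ) (u v : m → ℂ) :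
    euclInner (A.mulVec u) v = euclInner u (Aᴴ.mulVec v) := by
  simp only [euclInner, Matrix.mulVec, dotProduct, Matrix.conjTranspose_apply,
    Finset.sum_mul, star_sum, Finset.mul_sum, star_mul', star_star]
  rw [Finset.sum_comm]
  exact Finset.sum_congr rfl fun i _ => Finset.sum_congr rfl fun j _ => by ring

lemma le_of_sq {a b : ℝ} (ha : 0 ≤ a) (hb : 0 ≤ b) (h : a ^ 2 ≤ b ^ 2) : a ≤ b := by
  nlinarith

lemma euclNorm_add_sq (u v : m → ℂ) (h : euclInner u v = 0) :
    euclNorm (u + v) ^ 2 = euclNorm u ^ 2 + euclNorm v ^ 2 := by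
  have h2 : euclInner v u = 0 := by rw [← star_euclInner, h, star_zero]
  have e : euclInner (u + v) (u + v) = euclInner u u + euclInner v v := by
    rw [euclInner_add_left, euclInner_add_right, euclInner_add_right, h, h2]
    ring
  rw [euclInner_self, euclInner_self, euclInner_self] at e
  exact_mod_cast e

lemma euclNorm_sum_sq {κ : Type*} [Fintype κ] (w : κ → m → ℂ)
    (h : ∀ r s, r ≠ s → euclInner (w r) (w s) = 0) :
    euclNorm (∑ r, w r) ^ 2 = ∑ r, euclNorm (w r) ^ 2 := by
  have e : euclInner (∑ r, w r) (∑ r, w r) = ∑ r, euclInner (w r) (w r) := by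
    rw [euclInner_sum_left]
    refine Finset.sum_congr rfl fun r _ => ?_
    rw [euclInner_sum_right]
    exact Finset.sum_eq_single r (fun s _ hs => h r s (Ne.symm hs)) (by simp)
  simp only [euclInner_self] at e
  exact_mod_cast e

/-- The vectors are parallel if one is approximated arbitrarily well by multiples of the other. -/
lemma parallel (a b : m → ℂ) (hb : b ≠ 0) (hab : euclNorm a = euclNorm b)
    (h : ∀ ε > 0, ∃ lam : ℂ, euclNorm (a - lam • b) < ε) :
    ∃ μ : ℂ, ‖μ‖ = 1 ∧ a = μ • b := by
  have hnb : (0 : ℝ) < euclNorm b := euclNorm_pos hb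
  set μ : ℂ := euclInner a b / ((euclNorm b ^ 2 : ℝ) : ℂ) with hμdef
  set w : m → ℂ := a - μ • b with hwdef
  have hnb2 : (((euclNorm b ^ 2 : ℝ) : ℂ)) ≠ 0 := by
    simp only [ne_eq, Complex.ofReal_eq_zero]
    positivity
  have hwb : euclInner w b = 0 := by
    have hnb2' : (((euclNorm b : ℝ) : ℂ)) ^ 2 ≠ 0 :=
      pow_ne_zero 2 (Complex.ofReal_ne_zero.mpr (ne_of_gt hnb))
    rw [hwdef, euclInner_sub_left, euclInner_smul_left, euclInner_self b, hμdef]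
    push_cast
    rw [div_mul_cancel₀ _ hnb2', sub_self]
  have hwle : ∀ lam : ℂ, euclNorm w ≤ euclNorm (a - lam • b) := by
    intro lam
    have horthog : euclInner w ((μ - lam) • b) = 0 := by
      rw [euclInner_smul_right, hwb, mul_zero]
    have hdecomp : a - lam • b = w + (μ - lam) • b := by
      rw [hwdef]
      funext i
      simp only [Pi.add_apply, Pi.sub_apply, Pi.smul_apply, smul_eq_mul]
      ring
    rw [hdecomp]
    refine le_of_sq (euclNorm_nonneg _) (euclNorm_nonneg _) ?_
    rw [euclNorm_add_sq _ _ horthog]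
    nlinarith [sq_nonneg (euclNorm ((μ - lam) • b))]
  have hw0 : euclNorm w = 0 := by
    by_contra hne
    have hpos : 0 < euclNorm w := lt_of_le_of_ne (euclNorm_nonneg w) (Ne.symm hne)
    obtain ⟨lam, hlam⟩ := h _ hpos
    exact absurd (lt_of_le_of_lt (hwle lam) hlam) (lt_irrefl _)
  have ha : a = μ • b := sub_eq_zero.mp (euclNorm_eq_zero hw0)
  refine ⟨μ, ?_, ha⟩
  have h2 : euclNorm a = ‖μ‖ * euclNorm b := by rw [ha, euclNorm_smul]
  have h1 : (1 : ℝ) * euclNorm b = ‖μ‖ * euclNorm b := by rw [one_mul]; linarith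
  exact (mul_right_cancel₀ (ne_of_gt hnb) h1).symm

/-- The phase `e^{i t θ_r}`. -/
noncomputable def pc {ι : Type*} (θ : ι → ℝ) (t : ℤ) (r : ι) : ℂ :=
  Complex.exp ((t : ℂ) * θ r * Complex.I)

lemma pc_norm {ι : Type*} (θ : ι → ℝ) (t : ℤ) (r : ι) : ‖pc θ t r‖ = 1 := by
  rw [pc, show ((t : ℂ) * θ r * Complex.I) = ((t * θ r : ℝ) : ℂ) * Complex.I by push_cast; ring,
    Complex.norm_exp_ofReal_mul_I]

lemma pc_mul {ι : Type*} (θ : ι → ℝ) (a b : ℤ) (r : ι) :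
    pc θ a r * pc θ b r = pc θ (a + b) r := by
  rw [pc, pc, pc, ← Complex.exp_add]
  congr 1
  push_cast
  ring

lemma pc_zero {ι : Type*} (θ : ι → ℝ) (r : ι) : pc θ 0 r = 1 := by
  simp [pc]

lemma pc_ne_zero {ι : Type*} (θ : ι → ℝ) (t : ℤ) (r : ι) : pc θ t r ≠ 0 :=
  Complex.exp_ne_zero _

section Spectral

variable {n : ℕ} {ι : Type*} [Fintype ι]
  (θ : ι → ℝ) (F : ι → Matrix (Fin n) (Fin n) ℂ)

/-- The candidate for `U^t`, namely `∑ r e^{i t θ_r} F_r`. -/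
noncomputable def pV (t : ℤ) : Matrix (Fin n) (Fin n) ℂ := ∑ r, pc θ t r • F r

variable (hidem : ∀ r, F r * F r = F r)
    (horth : ∀ r s, r ≠ s → F r * F s = 0)
    (hsum : ∑ r, F r = 1)

include hidem horth in
lemma pV_mul (a b : ℤ) : pV θ F a * pV θ F b = pV θ F (a + b) := by
  rw [pV, pV, pV, Finset.sum_mul]
  refine Finset.sum_congr rfl fun r _ => ?_
  rw [Finset.mul_sum]
  rw [show (∑ s, pc θ a r • F r * (pc θ b s • F s))
      = ∑ s, (pc θ a r * pc θ b s) • (F r * F s) from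
    Finset.sum_congr rfl fun s _ => by rw [smul_mul_smul_comm]]
  rw [Finset.sum_eq_single r (fun s _ hs => by rw [horth r s (Ne.symm hs), smul_zero])
    (by simp)]
  rw [hidem, pc_mul]

include hsum in
lemma pV_zero : pV θ F 0 = 1 := by
  rw [pV]
  simp only [pc_zero, one_smul]
  exact hsum

variable {U : Matrix (Fin n) (Fin n) ℂ}

lemma U_eq_pV_one (hU : U = ∑ r, Complex.exp (θ r * Complex.I) • F r) : U = pV θ F 1 := by
  rw [hU, pV]
  refine Finset.sum_congr rfl fun r _ => ?_
  congr 1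
  rw [pc]
  norm_num

include hidem horth hsum in
lemma zpow_eq_pV (hU : U = ∑ r, Complex.exp (θ r * Complex.I) • F r) (t : ℤ) :
    U ^ t = pV θ F t := by
  have key : ∀ k : ℕ, U ^ k = pV θ F (k : ℤ) := by
    intro k
    induction k with
    | zero => simpa using (pV_zero θ F hsum).symm
    | succ k ih =>
      rw [pow_succ, ih, U_eq_pV_one θ F hU, pV_mul θ F hidem horth]
      norm_cast
  cases t with
  | ofNat k => rw [Int.ofNat_eq_coe, zpow_natCast, key k]
  | negSucc k =>
    rw [zpow_negSucc, key (k + 1)]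
    refine Matrix.inv_eq_left_inv ?_
    rw [pV_mul θ F hidem horth,
      show (Int.negSucc k + ((k + 1 : ℕ) : ℤ)) = 0 by rw [Int.negSucc_eq]; push_cast; ring]
    exact pV_zero θ F hsum

end Spectral

lemma sum_mulVec {κ : Type*} (s : Finset κ) (M : κ → Matrix m m ℂ) (v : m → ℂ) :
    (∑ r ∈ s, M r).mulVec v = ∑ r ∈ s, (M r).mulVec v := by
  induction s using Finset.cons_induction with
  | empty => simp [Matrix.zero_mulVec]
  | cons a s ha ih => rw [Finset.sum_cons, Finset.sum_cons, Matrix.add_mulVec, ih]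

end PGSTAux

open PGSTAux

theorem stmt7 {n : ℕ} {ι : Type*} [Fintype ι]
    (θ : ι → ℝ) (F : ι → Matrix (Fin n) (Fin n) ℂ)
    (hdist : ∀ r s, Complex.exp (θ r * Complex.I) = Complex.exp (θ s * Complex.I) → r = s)
    (hherm : ∀ r, (F r)ᴴ = F r)
    (hidem : ∀ r, F r * F r = F r)
    (horth : ∀ r s, r ≠ s → F r * F s = 0)
    (hsum : ∑ r, F r = 1)
    (U : Matrix (Fin n) (Fin n) ℂ)
    (hU : U = ∑ r, Complex.exp (θ r * Complex.I) • F r)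
    (x y : Fin n → ℂ) (hx : euclNorm x = 1) (hy : euclNorm y = 1) :
    PGST U x y ↔
      ∃ μ : ι → ℂ,
        (∀ r, ‖μ r‖ = 1 ∧ (F r).mulVec x = μ r • (F r).mulVec y) ∧
        ∃ γ : ℂ, ‖γ‖ = 1 ∧ ∀ ε > 0, ∃ t : ℤ, ∀ r, (F r).mulVec x ≠ 0 →
          ‖Complex.exp ((t : ℂ) * θ r * Complex.I) * μ r - γ‖ < ε := by
  classical
  have hPx : ∀ r, (F r).mulVec x = (F r).mulVec x := fun r => rfl
  set Px : ι → Fin n → ℂ := fun r => (F r).mulVec x with hPxdef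
  set Py : ι → Fin n → ℂ := fun r => (F r).mulVec y with hPydef
  -- orthogonality of ranges of the projections
  have hinner : ∀ (r s : ι), r ≠ s → ∀ a b : Fin n → ℂ,
      euclInner ((F r).mulVec a) ((F s).mulVec b) = 0 := by
    intro r s hrs a b
    rw [euclInner_mulVec, hherm, Matrix.mulVec_mulVec, horth r s hrs, Matrix.zero_mulVec]
    simp [euclInner]
  -- decomposition of a vector
  have hdecomp : ∀ v : Fin n → ℂ, ∑ r, (F r).mulVec v = v := by
    intro v
    rw [← PGSTAux.sum_mulVec, hsum, Matrix.one_mulVec]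
  -- Pythagoras for families of projected vectors
  have hpyth : ∀ a : ι → Fin n → ℂ,
      euclNorm (∑ r, (F r).mulVec (a r)) ^ 2 = ∑ r, euclNorm ((F r).mulVec (a r)) ^ 2 := by
    intro a
    exact euclNorm_sum_sq _ (fun r s hrs => hinner r s hrs (a r) (a s))
  -- the individual terms
  have hterm : ∀ (t : ℤ) (γ : ℂ) (r : ι),
      (F r).mulVec (pc θ t r • x - γ • y) = pc θ t r • Px r - γ • Py r := by
    intro t γ r
    rw [Matrix.mulVec_sub, Matrix.mulVec_smul, Matrix.mulVec_smul]
  -- the error formula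
  have herr : ∀ (t : ℤ) (γ : ℂ),
      euclNorm ((U ^ t).mulVec x - γ • y) ^ 2
        = ∑ r, euclNorm (pc θ t r • Px r - γ • Py r) ^ 2 := by
    intro t γ
    have h1 : (U ^ t).mulVec x - γ • y = ∑ r, (F r).mulVec (pc θ t r • x - γ • y) := by
      have e1 : ∀ r : ι, (pc θ t r • F r).mulVec x = pc θ t r • Px r := fun r =>
        Matrix.smul_mulVec _ _ _
      have hdecompy : ∑ r, Py r = y := by
        simp only [hPydef]
        exact hdecomp y
      rw [zpow_eq_pV θ F hidem horth hsum hU t, pV, PGSTAux.sum_mulVec,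
        Finset.sum_congr rfl fun r _ => e1 r,
        Finset.sum_congr rfl fun r _ => hterm t γ r,
        show γ • y = γ • ∑ r, Py r from by rw [hdecompy],
        Finset.sum_sub_distrib, Finset.smul_sum]
    rw [h1]
    have h2 := hpyth (fun r => pc θ t r • x - γ • y)
    simp only [hterm t γ] at h2 ⊢
    exact h2
  -- norms of components are ≤ the total norm
  have hle : ∀ (t : ℤ) (γ : ℂ) (r : ι),
      euclNorm (pc θ t r • Px r - γ • Py r) ≤ euclNorm ((U ^ t).mulVec x - γ • y) := by
    intro t γ r
    refine le_of_sq (euclNorm_nonneg _) (euclNorm_nonneg _) ?_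
    rw [herr t γ]
    exact Finset.single_le_sum (f := fun r => euclNorm (pc θ t r • Px r - γ • Py r) ^ 2)
      (fun s _ => sq_nonneg _) (Finset.mem_univ r)
  constructor
  · rintro ⟨γ, hγ, h⟩
    have hcomp : ∀ ε > 0, ∃ t : ℤ, ∀ r, euclNorm (pc θ t r • Px r - γ • Py r) < ε := by
      intro ε hε
      obtain ⟨t, ht⟩ := h ε hε
      exact ⟨t, fun r => lt_of_le_of_lt (hle t γ r) ht⟩
    -- equality of norms
    have hnorm : ∀ r, euclNorm (Px r) = euclNorm (Py r) := by
      intro r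
      have habs : ∀ ε > 0, |euclNorm (Px r) - euclNorm (Py r)| < ε := by
        intro ε hε
        obtain ⟨t, ht⟩ := hcomp ε hε
        have h2 : euclNorm (Px r) = euclNorm (pc θ t r • Px r) := by
          rw [euclNorm_smul, pc_norm, one_mul]
        have h3 : euclNorm (Py r) = euclNorm (γ • Py r) := by
          rw [euclNorm_smul, hγ, one_mul]
        rw [h2, h3]
        exact lt_of_le_of_lt (abs_euclNorm_sub_euclNorm_le _ _) (ht r)
      have h0 : |euclNorm (Px r) - euclNorm (Py r)| ≤ 0 := by
        by_contra hlt
        push_neg at hlt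
        exact absurd (habs _ hlt) (lt_irrefl _)
      have h4 := abs_eq_zero.mp (le_antisymm h0 (abs_nonneg _))
      linarith
    -- strong cospectrality
    have hsc : ∀ r, ∃ μr : ℂ, ‖μr‖ = 1 ∧ Px r = μr • Py r := by
      intro r
      by_cases h0 : Px r = 0
      · have hy0 : Py r = 0 := by
          refine euclNorm_eq_zero ?_
          rw [← hnorm r, h0, euclNorm_zero]
        exact ⟨1, norm_one, by rw [h0, hy0, smul_zero]⟩
      · have hy0 : Py r ≠ 0 := by
          intro hc
          apply h0
          refine euclNorm_eq_zero ?_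
          rw [hnorm r, hc, euclNorm_zero]
        refine parallel (Px r) (Py r) hy0 (hnorm r) ?_
        intro ε hε
        obtain ⟨t, ht⟩ := hcomp ε hε
        refine ⟨(pc θ t r)⁻¹ * γ, ?_⟩
        have hkey : Px r - ((pc θ t r)⁻¹ * γ) • Py r
            = (pc θ t r)⁻¹ • (pc θ t r • Px r - γ • Py r) := by
          rw [smul_sub, smul_smul, smul_smul, inv_mul_cancel₀ (pc_ne_zero θ t r), one_smul]
        rw [hkey, euclNorm_smul, norm_inv, pc_norm, inv_one, one_mul]
        exact ht r
    choose μ hμ1 hμ2 using hsc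
    refine ⟨μ, fun r => ⟨hμ1 r, hμ2 r⟩, γ, hγ, ?_⟩
    -- the support and its minimum
    set S : Finset ι := Finset.univ.filter (fun r => Px r ≠ 0) with hS
    have hSne : S.Nonempty := by
      by_contra hSe
      rw [Finset.not_nonempty_iff_eq_empty] at hSe
      have hall : ∀ r, Px r = 0 := by
        intro r
        by_contra hr
        have hmem : r ∈ S := by rw [hS, Finset.mem_filter]; exact ⟨Finset.mem_univ r, hr⟩
        rw [hSe] at hmem
        exact absurd hmem (Finset.notMem_empty r)
      have hx0 : x = 0 := by
        rw [← hdecomp x]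
        exact Finset.sum_eq_zero fun r _ => hall r
      rw [hx0, euclNorm_zero] at hx
      norm_num at hx
    obtain ⟨r0, hr0S, hr0min⟩ := S.exists_min_image (fun r => euclNorm (Py r)) hSne
    have hPyS : ∀ r ∈ S, 0 < euclNorm (Py r) := by
      intro r hrS
      apply euclNorm_pos
      intro hc
      have hr : Px r ≠ 0 := (Finset.mem_filter.mp hrS).2
      apply hr
      refine euclNorm_eq_zero ?_
      rw [hnorm r, hc, euclNorm_zero]
    have hMpos : 0 < euclNorm (Py r0) := hPyS r0 hr0S
    intro ε hε
    obtain ⟨t, ht⟩ := h (ε * euclNorm (Py r0)) (mul_pos hε hMpos)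
    refine ⟨t, fun r hr => ?_⟩
    have hrS : r ∈ S := by rw [hS, Finset.mem_filter]; exact ⟨Finset.mem_univ r, hr⟩
    have hPyr : 0 < euclNorm (Py r) := hPyS r hrS
    have hcb : euclNorm (pc θ t r • Px r - γ • Py r) < ε * euclNorm (Py r0) :=
      lt_of_le_of_lt (hle t γ r) ht
    have hid : pc θ t r • Px r - γ • Py r = (pc θ t r * μ r - γ) • Py r := by
      rw [hμ2 r, smul_smul, sub_smul]
    have hprod : ‖pc θ t r * μ r - γ‖ * euclNorm (Py r) < ε * euclNorm (Py r0) := by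
      rw [← euclNorm_smul, ← hid]
      exact hcb
    have hfin : ‖pc θ t r * μ r - γ‖ < ε := by
      by_contra hge
      push_neg at hge
      have h5 : ε * euclNorm (Py r0) ≤ ‖pc θ t r * μ r - γ‖ * euclNorm (Py r) :=
        mul_le_mul hge (hr0min r hrS) (le_of_lt hMpos) (norm_nonneg _)
      linarith
    exact hfin
  · rintro ⟨μ, hμ, γ, hγ, h⟩
    refine ⟨γ, hγ, ?_⟩
    intro ε hε
    obtain ⟨t, ht⟩ := h (ε / 2) (by linarith)
    refine ⟨t, ?_⟩
    have hPxy : ∀ r, euclNorm (Px r) = euclNorm (Py r) := by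
      intro r
      rw [show Px r = μ r • Py r from (hμ r).2, euclNorm_smul, (hμ r).1, one_mul]
    have hsum1 : ∑ r, euclNorm (Py r) ^ 2 = 1 := by
      have h2 := hpyth (fun _ => x)
      simp only [hdecomp x, hx, one_pow] at h2
      calc ∑ r, euclNorm (Py r) ^ 2 = ∑ r, euclNorm (Px r) ^ 2 :=
            Finset.sum_congr rfl fun r _ => by rw [hPxy r]
        _ = 1 := h2.symm
    have htermb : ∀ r, euclNorm (pc θ t r • Px r - γ • Py r) ^ 2
        ≤ (ε / 2) ^ 2 * euclNorm (Py r) ^ 2 := by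
      intro r
      by_cases h0 : Px r = 0
      · have hμr : (0 : Fin n → ℂ) = μ r • Py r := h0 ▸ (hμ r).2
        have hμne : μ r ≠ 0 := by
          intro hc
          have := (hμ r).1
          rw [hc, norm_zero] at this
          norm_num at this
        have hy0 : Py r = 0 := by
          rcases smul_eq_zero.mp hμr.symm with hc | hc
          · exact absurd hc hμne
          · exact hc
        rw [h0, hy0]
        simp [euclNorm_zero]
      · have hδ : ‖pc θ t r * μ r - γ‖ < ε / 2 := ht r h0
        have hid : pc θ t r • Px r - γ • Py r = (pc θ t r * μ r - γ) • Py r := by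
          rw [show Px r = μ r • Py r from (hμ r).2, smul_smul, sub_smul]
        rw [hid, euclNorm_smul, mul_pow]
        have hb2 : ‖pc θ t r * μ r - γ‖ ^ 2 ≤ (ε / 2) ^ 2 := by
          nlinarith [norm_nonneg (pc θ t r * μ r - γ)]
        nlinarith [sq_nonneg (euclNorm (Py r))]
    have hkey : euclNorm ((U ^ t).mulVec x - γ • y) ^ 2 ≤ (ε / 2) ^ 2 := by
      rw [herr t γ]
      calc ∑ r, euclNorm (pc θ t r • Px r - γ • Py r) ^ 2
          ≤ ∑ r, (ε / 2) ^ 2 * euclNorm (Py r) ^ 2 := Finset.sum_le_sum fun r _ => htermb r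
        _ = (ε / 2) ^ 2 * ∑ r, euclNorm (Py r) ^ 2 := by rw [← Finset.mul_sum]
        _ = (ε / 2) ^ 2 := by rw [hsum1, mul_one]
    have hfin : euclNorm ((U ^ t).mulVec x - γ • y) ≤ ε / 2 :=
      le_of_sq (euclNorm_nonneg _) (by linarith) hkey
    linarith
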